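/- Let y, γ ∈ ℝ, v > 0, β > 0, λ ∈ ℝ, λ₁ ∈ ℝ, and define α(o) = log(exp(o) + 1) + 1. Let L(o) = (1/2)·log(π/v) − α(o)·log(Ω) + (α(o) + 1/2)·log((y − γ)²·v + Ω) + log(Real.Gamma(α(o))) − log(Real.Gamma(α(o) + 1/2)) with Ω = 2β(1 + v), R(o) = |y − γ|·(2v + α(o)), and U(o) = −|y − γ|·log(exp(α(o) − 1) − 1). Then the derivative of the total UR-ERN loss o ↦ L(o) + λ·R(o) + λ₁·U(o) tends to −λ₁·|y − γ| as o → −∞; in particular, if y ≠ γ and λ₁ ≠ 0, this limit is nonzero. -/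

import Mathlib

open Real Filter

/-- SoftPlus activation plus one. -/
noncomputable def softplusAlpha (o : ℝ) : ℝ := Real.log (Real.exp o + 1) + 1

lemma complexGamma_diff_on : DifferentiableOn ℂ Complex.Gamma {z : ℂ | 0 < z.re} := by
  intro z hz
  refine (Complex.differentiableAt_Gamma z fun m => ?_).differentiableWithinAt
  intro h
  rw [h] at hz
  simp only [Set.mem_setOf_eq, Complex.neg_re, Complex.natCast_re] at hz
  have : (0:ℝ) ≤ m := Nat.cast_nonneg m
  linarith

lemma pos_ne_neg_nat {x : ℝ} (hx : 0 < x) : ∀ m : ℕ, x ≠ -m := by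
  intro m h
  rw [h] at hx
  have : (0:ℝ) ≤ m := Nat.cast_nonneg m
  linarith

lemma deriv_realGamma_eq {t : ℝ} (ht : 0 < t) :
    deriv Real.Gamma t = (deriv Complex.Gamma (t : ℂ)).re := by
  have hd : DifferentiableAt ℂ Complex.Gamma (t : ℂ) := by
    refine Complex.differentiableAt_Gamma _ fun m => ?_
    intro h
    have h2 := congrArg Complex.re h
    simp only [Complex.ofReal_re, Complex.neg_re, Complex.natCast_re] at h2
    have : (0:ℝ) ≤ m := Nat.cast_nonneg m
    linarith
  have h1 : HasDerivAt (fun x : ℝ => (Complex.Gamma (x : ℂ)).re)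
      (deriv Complex.Gamma (t : ℂ)).re t := hd.hasDerivAt.real_of_complex
  have h2 : (fun x : ℝ => (Complex.Gamma (x : ℂ)).re) = Real.Gamma := by
    funext x
    rw [Complex.Gamma_ofReal, Complex.ofReal_re]
  rw [h2] at h1
  exact h1.deriv

lemma continuousAt_deriv_Gamma {x : ℝ} (hx : 0 < x) :
    ContinuousAt (deriv Real.Gamma) x := by
  have hopen : IsOpen {z : ℂ | 0 < z.re} := isOpen_lt continuous_const Complex.continuous_re
  have han : AnalyticOnNhd ℂ Complex.Gamma {z : ℂ | 0 < z.re} :=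
    complexGamma_diff_on.analyticOnNhd hopen
  have hc : ContinuousAt (deriv Complex.Gamma) (x : ℂ) :=
    ((han.deriv) (x : ℂ) (by simpa using hx)).continuousAt
  have hcr : ContinuousAt (fun t : ℝ => (deriv Complex.Gamma (t : ℂ)).re) x :=
    Complex.continuous_re.continuousAt.comp (hc.comp Complex.continuous_ofReal.continuousAt)
  refine hcr.congr ?_
  filter_upwards [eventually_gt_nhds hx] with t ht
  exact (deriv_realGamma_eq ht).symm

theorem stmt_16 (y γ v β lam lam1 : ℝ) (hv : 0 < v) (hβ : 0 < β) :
    Tendsto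
      (deriv (fun o : ℝ =>
        ((1 / 2) * Real.log (Real.pi / v)
          - softplusAlpha o * Real.log (2 * β * (1 + v))
          + (softplusAlpha o + 1 / 2) * Real.log ((y - γ) ^ 2 * v + 2 * β * (1 + v))
          + Real.log (Real.Gamma (softplusAlpha o))
          - Real.log (Real.Gamma (softplusAlpha o + 1 / 2)))
        + lam * (|y - γ| * (2 * v + softplusAlpha o))
        + lam1 * (-|y - γ| * Real.log (Real.exp (softplusAlpha o - 1) - 1))))
      atBot (nhds (-lam1 * |y - γ|))
    ∧ (y ≠ γ → lam1 ≠ 0 → -lam1 * |y - γ| ≠ 0) := by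
  have hfun : (fun o : ℝ =>
        ((1 / 2) * Real.log (Real.pi / v)
          - softplusAlpha o * Real.log (2 * β * (1 + v))
          + (softplusAlpha o + 1 / 2) * Real.log ((y - γ) ^ 2 * v + 2 * β * (1 + v))
          + Real.log (Real.Gamma (softplusAlpha o))
          - Real.log (Real.Gamma (softplusAlpha o + 1 / 2)))
        + lam * (|y - γ| * (2 * v + softplusAlpha o))
        + lam1 * (-|y - γ| * Real.log (Real.exp (softplusAlpha o - 1) - 1)))
      = (fun o : ℝ =>
        ((1 / 2) * Real.log (Real.pi / v)
          - softplusAlpha o * Real.log (2 * β * (1 + v))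
          + (softplusAlpha o + 1 / 2) * Real.log ((y - γ) ^ 2 * v + 2 * β * (1 + v))
          + Real.log (Real.Gamma (softplusAlpha o))
          - Real.log (Real.Gamma (softplusAlpha o + 1 / 2)))
        + lam * (|y - γ| * (2 * v + softplusAlpha o))
        + lam1 * (-|y - γ| * o)) := by
    funext o
    have h1 : Real.exp (softplusAlpha o - 1) - 1 = Real.exp o := by
      have hpos : (0:ℝ) < Real.exp o + 1 := by positivity
      simp [softplusAlpha, Real.exp_log hpos]
    rw [h1, Real.log_exp]
  rw [hfun]
  set g : ℝ → ℝ := fun x =>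
    -Real.log (2 * β * (1 + v)) + Real.log ((y - γ) ^ 2 * v + 2 * β * (1 + v))
    + lam * |y - γ|
    + deriv Real.Gamma x / Real.Gamma x
    - deriv Real.Gamma (x + 1 / 2) / Real.Gamma (x + 1 / 2) with hg
  have key : ∀ o : ℝ, HasDerivAt (fun o : ℝ =>
        ((1 / 2) * Real.log (Real.pi / v)
          - softplusAlpha o * Real.log (2 * β * (1 + v))
          + (softplusAlpha o + 1 / 2) * Real.log ((y - γ) ^ 2 * v + 2 * β * (1 + v))
          + Real.log (Real.Gamma (softplusAlpha o))
          - Real.log (Real.Gamma (softplusAlpha o + 1 / 2)))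
        + lam * (|y - γ| * (2 * v + softplusAlpha o))
        + lam1 * (-|y - γ| * o))
      (g (softplusAlpha o) * (Real.exp o / (Real.exp o + 1)) - lam1 * |y - γ|) o := by
    intro o
    have hepos : (0:ℝ) < Real.exp o + 1 := by positivity
    have hα1 : (1:ℝ) ≤ softplusAlpha o := by
      have : 0 ≤ Real.log (Real.exp o + 1) := Real.log_nonneg (by linarith [Real.exp_pos o])
      simp only [softplusAlpha]
      linarith
    have hαpos : 0 < softplusAlpha o := by linarith
    have hα : HasDerivAt softplusAlpha (Real.exp o / (Real.exp o + 1)) o := by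
      have h1 : HasDerivAt (fun o : ℝ => Real.exp o + 1) (Real.exp o) o :=
        (Real.hasDerivAt_exp o).add_const 1
      have := (h1.log hepos.ne').add_const 1
      exact this
    have hα2 : HasDerivAt (fun o : ℝ => softplusAlpha o + 1 / 2)
        (Real.exp o / (Real.exp o + 1)) o := hα.add_const _
    have hGa : DifferentiableAt ℝ Real.Gamma (softplusAlpha o) :=
      Real.differentiableAt_Gamma (pos_ne_neg_nat hαpos)
    have hGb : DifferentiableAt ℝ Real.Gamma (softplusAlpha o + 1 / 2) :=
      Real.differentiableAt_Gamma (pos_ne_neg_nat (by linarith))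
    have hGapos : 0 < Real.Gamma (softplusAlpha o) := Real.Gamma_pos_of_pos hαpos
    have hGbpos : 0 < Real.Gamma (softplusAlpha o + 1 / 2) :=
      Real.Gamma_pos_of_pos (by linarith)
    have h4 : HasDerivAt (fun o : ℝ => Real.Gamma (softplusAlpha o))
        (deriv Real.Gamma (softplusAlpha o) * (Real.exp o / (Real.exp o + 1))) o :=
      hGa.hasDerivAt.comp o hα
    have h4l := h4.log hGapos.ne'
    have h5 : HasDerivAt (fun o : ℝ => Real.Gamma (softplusAlpha o + 1 / 2))
        (deriv Real.Gamma (softplusAlpha o + 1 / 2) * (Real.exp o / (Real.exp o + 1))) o :=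
      HasDerivAt.comp (h₂ := Real.Gamma) (h := fun o : ℝ => softplusAlpha o + 1 / 2) o
        hGb.hasDerivAt hα2
    have h5l := h5.log hGbpos.ne'
    have hT :=
      ((((((hasDerivAt_const o ((1 / 2) * Real.log (Real.pi / v))).sub
            (hα.mul_const (Real.log (2 * β * (1 + v))))).add
            (hα2.mul_const (Real.log ((y - γ) ^ 2 * v + 2 * β * (1 + v))))).add
            h4l).sub h5l).add
          (((hα.const_add (2 * v)).const_mul |y - γ|).const_mul lam)).add
        (((hasDerivAt_id o).const_mul (-|y - γ|)).const_mul lam1)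
    refine hT.congr_deriv ?_
    symm
    simp only [hg]
    field_simp
    ring
  constructor
  · have hderiv : deriv (fun o : ℝ =>
        ((1 / 2) * Real.log (Real.pi / v)
          - softplusAlpha o * Real.log (2 * β * (1 + v))
          + (softplusAlpha o + 1 / 2) * Real.log ((y - γ) ^ 2 * v + 2 * β * (1 + v))
          + Real.log (Real.Gamma (softplusAlpha o))
          - Real.log (Real.Gamma (softplusAlpha o + 1 / 2)))
        + lam * (|y - γ| * (2 * v + softplusAlpha o))
        + lam1 * (-|y - γ| * o))
      = fun o : ℝ => g (softplusAlpha o) * (Real.exp o / (Real.exp o + 1)) - lam1 * |y - γ| :=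
      funext fun o => (key o).deriv
    rw [hderiv]
    have hσ : Tendsto (fun o : ℝ => Real.exp o / (Real.exp o + 1)) atBot (nhds 0) := by
      have := Real.tendsto_exp_atBot.div
        (Real.tendsto_exp_atBot.add (tendsto_const_nhds (x := (1:ℝ)))) (by norm_num)
      rw [zero_add, zero_div] at this
      exact this
    have hαt : Tendsto softplusAlpha atBot (nhds 1) := by
      have h1 : Tendsto (fun o : ℝ => Real.exp o + 1) atBot (nhds 1) := by
        simpa using Real.tendsto_exp_atBot.add (tendsto_const_nhds (x := (1:ℝ)))
      have h2 : Tendsto (fun o : ℝ => Real.log (Real.exp o + 1)) atBot (nhds 0) := by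
        have := (Real.continuousAt_log one_ne_zero).tendsto.comp h1
        rw [Real.log_one] at this
        exact this
      have := h2.add (tendsto_const_nhds (x := (1:ℝ)))
      rw [zero_add] at this
      exact this
    have hgc : ContinuousAt g 1 := by
      have c1 : ContinuousAt (fun x : ℝ => deriv Real.Gamma x / Real.Gamma x) 1 :=
        (continuousAt_deriv_Gamma one_pos).div
          (Real.differentiableAt_Gamma (pos_ne_neg_nat one_pos)).continuousAt
          (Real.Gamma_pos_of_pos one_pos).ne'
      have hb : (0:ℝ) < 1 + 1 / 2 := by norm_num
      have c2 : ContinuousAt (fun x : ℝ => deriv Real.Gamma (x + 1 / 2) / Real.Gamma (x + 1 / 2)) 1 := by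
        have hadd : ContinuousAt (fun x : ℝ => x + 1 / 2) 1 :=
          (continuous_id.add continuous_const).continuousAt
        refine ContinuousAt.div ?_ ?_ (Real.Gamma_pos_of_pos hb).ne'
        · exact ContinuousAt.comp (f := fun x : ℝ => x + 1 / 2) (x := 1)
            (continuousAt_deriv_Gamma hb) hadd
        · exact ContinuousAt.comp (f := fun x : ℝ => x + 1 / 2) (x := 1)
            (Real.differentiableAt_Gamma (pos_ne_neg_nat hb)).continuousAt hadd
      rw [hg]
      exact (continuousAt_const.add c1).sub c2
    have hgt : Tendsto (fun o : ℝ => g (softplusAlpha o)) atBot (nhds (g 1)) :=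
      hgc.tendsto.comp hαt
    have hfin : Tendsto
        (fun o : ℝ => g (softplusAlpha o) * (Real.exp o / (Real.exp o + 1)) - lam1 * |y - γ|)
        atBot (nhds (g 1 * 0 - lam1 * |y - γ|)) :=
      (hgt.mul hσ).sub tendsto_const_nhds
    convert hfin using 2
    ring
  · intro hy hl
    exact mul_ne_zero (neg_ne_zero.mpr hl) (abs_ne_zero.mpr (sub_ne_zero.mpr hy))
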